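/- arXiv:0904.4140 — 4 statements merged into one kernel-verified Lean document; each statement's English description precedes it below -/
import Mathlib

section
/- Let (X, Σ) be a measurable space, μ a measure on X, and f, g : X → ℝ nonnegative measurable functions that are integrable with respect to μ and satisfy ∫_X f dμ ≤ 1. Let n ≥ 1 and k be integers with 0 ≤ k ≤ n. Then for every measurable set E ⊆ X one has ∫_E f dμ − ∫_E f^(k/n) · g^((n−k)/n) dμ ≤ (∫_X |f − g| dμ)^((n−k)/n). -/
open MeasureTheory Real

private lemma sub_rpow_le_rpow_sub {a b q : ℝ} (hb : 0 ≤ b) (hba : b ≤ a)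
    (hq0 : 0 ≤ q) (hq1 : q ≤ 1) : a ^ q - b ^ q ≤ (a - b) ^ q := by
  have ha : 0 ≤ a := hb.trans hba
  have hab : 0 ≤ a - b := sub_nonneg.2 hba
  have key := NNReal.rpow_add_le_add_rpow b.toNNReal (a - b).toNNReal hq0 hq1
  have hsum : b.toNNReal + (a - b).toNNReal = a.toNNReal := by
    rw [← Real.toNNReal_add hb hab]; ring_nf
  rw [hsum] at key
  have h := NNReal.coe_le_coe.2 key
  rw [NNReal.coe_add, NNReal.coe_rpow, NNReal.coe_rpow, NNReal.coe_rpow,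
    Real.coe_toNNReal _ ha, Real.coe_toNNReal _ hb, Real.coe_toNNReal _ hab] at h
  linarith

private lemma integrable_rpow_mul_rpow {X : Type*} [MeasurableSpace X] {μ : Measure X}
    {u v : X → ℝ} (hu : Measurable u) (hv : Measurable v)
    (hu0 : ∀ x, 0 ≤ u x) (hv0 : ∀ x, 0 ≤ v x)
    (hui : Integrable u μ) (hvi : Integrable v μ) {p q : ℝ}
    (hp : 0 ≤ p) (hq : 0 ≤ q) (hpq : p + q = 1) :
    Integrable (fun x => u x ^ p * v x ^ q) μ := by
  refine Integrable.mono' ((hui.const_mul p).add (hvi.const_mul q))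
    (((hu.pow_const p).mul (hv.pow_const q)).aestronglyMeasurable) ?_
  filter_upwards with x
  have h1 : 0 ≤ u x ^ p * v x ^ q :=
    mul_nonneg (Real.rpow_nonneg (hu0 x) p) (Real.rpow_nonneg (hv0 x) q)
  simp only [Pi.add_apply, Real.norm_eq_abs, abs_of_nonneg h1]
  exact Real.geom_mean_le_arith_mean2_weighted hp hq (hu0 x) (hv0 x) hpq

private lemma integral_rpow_mul_rpow_le {X : Type*} [MeasurableSpace X] {μ : Measure X}
    {u v : X → ℝ} (hu : Measurable u) (hv : Measurable v)
    (hu0 : ∀ x, 0 ≤ u x) (hv0 : ∀ x, 0 ≤ v x)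
    (hui : Integrable u μ) (hvi : Integrable v μ) {p q : ℝ}
    (hp : 0 < p) (hq : 0 < q) (hpq : p + q = 1) :
    ∫ x, u x ^ p * v x ^ q ∂μ ≤ (∫ x, u x ∂μ) ^ p * (∫ x, v x ∂μ) ^ q := by
  have hp1 : p < 1 := by linarith
  have hPQ : (1 / p).HolderConjugate (1 / q) := by
    constructor
    · rw [one_div, one_div, inv_inv, inv_inv, inv_one]; exact hpq
    · positivity
    · positivity
  set A := ∫ x, u x ∂μ with hA
  set B := ∫ x, v x ∂μ with hB
  have hA0 : 0 ≤ A := integral_nonneg hu0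
  have hB0 : 0 ≤ B := integral_nonneg hv0
  have hlu : ∫⁻ x, ENNReal.ofReal (u x) ∂μ = ENNReal.ofReal A :=
    (ofReal_integral_eq_lintegral_ofReal hui (Filter.Eventually.of_forall hu0)).symm
  have hlv : ∫⁻ x, ENNReal.ofReal (v x) ∂μ = ENNReal.ofReal B :=
    (ofReal_integral_eq_lintegral_ofReal hvi (Filter.Eventually.of_forall hv0)).symm
  have key := ENNReal.lintegral_mul_le_Lp_mul_Lq μ hPQ
    (f := fun x => ENNReal.ofReal (u x) ^ p) (g := fun x => ENNReal.ofReal (v x) ^ q)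
    ((hu.ennreal_ofReal.pow_const p).aemeasurable)
    ((hv.ennreal_ofReal.pow_const q).aemeasurable)
  have hrw1 : ∀ x, (ENNReal.ofReal (u x) ^ p) ^ (1 / p) = ENNReal.ofReal (u x) := fun x => by
    rw [← ENNReal.rpow_mul, mul_one_div, div_self hp.ne', ENNReal.rpow_one]
  have hrw2 : ∀ x, (ENNReal.ofReal (v x) ^ q) ^ (1 / q) = ENNReal.ofReal (v x) := fun x => by
    rw [← ENNReal.rpow_mul, mul_one_div, div_self hq.ne', ENNReal.rpow_one]
  simp only [Pi.mul_apply, hrw1, hrw2, hlu, hlv] at key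
  have hint : Integrable (fun x => u x ^ p * v x ^ q) μ :=
    integrable_rpow_mul_rpow hu hv hu0 hv0 hui hvi hp.le hq.le hpq
  have heq : ∫ x, u x ^ p * v x ^ q ∂μ
      = (∫⁻ x, ENNReal.ofReal (u x) ^ p * ENNReal.ofReal (v x) ^ q ∂μ).toReal := by
    rw [integral_eq_lintegral_of_nonneg_ae
      (Filter.Eventually.of_forall fun x =>
        mul_nonneg (Real.rpow_nonneg (hu0 x) p) (Real.rpow_nonneg (hv0 x) q))
      hint.aestronglyMeasurable]
    congr 1
    refine lintegral_congr fun x => ?_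
    rw [ENNReal.ofReal_mul (Real.rpow_nonneg (hu0 x) p),
      ← ENNReal.ofReal_rpow_of_nonneg (hu0 x) hp.le,
      ← ENNReal.ofReal_rpow_of_nonneg (hv0 x) hq.le]
  rw [heq]
  have hne : ENNReal.ofReal A ^ (1 / (1 / p)) * ENNReal.ofReal B ^ (1 / (1 / q)) ≠ ⊤ :=
    ENNReal.mul_ne_top
      (ENNReal.rpow_ne_top_of_nonneg (by positivity) ENNReal.ofReal_ne_top)
      (ENNReal.rpow_ne_top_of_nonneg (by positivity) ENNReal.ofReal_ne_top)
  calc (∫⁻ x, ENNReal.ofReal (u x) ^ p * ENNReal.ofReal (v x) ^ q ∂μ).toReal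
      ≤ (ENNReal.ofReal A ^ (1 / (1 / p)) * ENNReal.ofReal B ^ (1 / (1 / q))).toReal :=
        ENNReal.toReal_mono hne key
    _ = A ^ p * B ^ q := by
        rw [ENNReal.toReal_mul, one_div_one_div, one_div_one_div, ← ENNReal.toReal_rpow,
          ← ENNReal.toReal_rpow, ENNReal.toReal_ofReal hA0, ENNReal.toReal_ofReal hB0]

/-- The key per-set estimate in the proof of Lemma 2.6:
for nonnegative measurable integrable `f, g` with `∫ f ≤ 1`, and `1 ≤ n`, `k ≤ n`,
for every measurable set `E`,
`∫_E f dμ − ∫_E f^(k/n) g^((n−k)/n) dμ ≤ (∫_X |f − g| dμ)^((n−k)/n)`. -/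
theorem per_set_estimate {X : Type*} [MeasurableSpace X] (μ : Measure X)
    (f g : X → ℝ) (hf_meas : Measurable f) (hg_meas : Measurable g)
    (hf0 : ∀ x, 0 ≤ f x) (hg0 : ∀ x, 0 ≤ g x)
    (hf_int : Integrable f μ) (hg_int : Integrable g μ)
    (hf1 : ∫ x, f x ∂μ ≤ 1)
    (n k : ℕ) (hn : 1 ≤ n) (hk : k ≤ n)
    (E : Set X) (hE : MeasurableSet E) :
    (∫ x in E, f x ∂μ) -
        ∫ x in E, f x ^ ((k : ℝ) / n) * g x ^ (((n : ℝ) - k) / n) ∂μ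
      ≤ (∫ x, |f x - g x| ∂μ) ^ (((n : ℝ) - k) / n) := by
  have hn0 : (n : ℝ) ≠ 0 := Nat.cast_ne_zero.2 (by omega)
  -- case k = n
  rcases eq_or_lt_of_le hk with rfl | hkn
  · have h1 : ((k : ℝ) - k) / k = 0 := by simp
    have h2 : ((k : ℝ)) / k = 1 := div_self hn0
    simp only [sub_self, zero_div, Real.rpow_zero, mul_one, h2, Real.rpow_one]
    exact zero_le_one
  have hpq' : (k : ℝ) / n + ((n : ℝ) - k) / n = 1 := by field_simp; ring
  set p : ℝ := (k : ℝ) / n with hp_def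
  set q : ℝ := ((n : ℝ) - k) / n with hq_def
  have hq0 : 0 < q := by
    apply div_pos _ (by positivity)
    have : (k : ℝ) < n := by exact_mod_cast hkn
    linarith
  have hp0 : 0 ≤ p := by positivity
  have hpq : p + q = 1 := hpq'
  have hq1 : q ≤ 1 := by linarith
  have habs_meas : Measurable fun x => |f x - g x| := (hf_meas.sub hg_meas).abs
  have habs0 : ∀ x, 0 ≤ |f x - g x| := fun x => abs_nonneg _
  have habs_int : Integrable (fun x => |f x - g x|) μ := (hf_int.sub hg_int).abs
  have hfg_int : Integrable (fun x => f x ^ p * g x ^ q) μ :=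
    integrable_rpow_mul_rpow hf_meas hg_meas hf0 hg0 hf_int hg_int hp0 hq0.le hpq
  have hfa_int : Integrable (fun x => f x ^ p * |f x - g x| ^ q) μ :=
    integrable_rpow_mul_rpow hf_meas habs_meas hf0 habs0 hf_int habs_int hp0 hq0.le hpq
  -- pointwise inequality
  have hpoint : ∀ x, f x - f x ^ p * g x ^ q ≤ f x ^ p * |f x - g x| ^ q := by
    intro x
    have hfx : f x = f x ^ p * f x ^ q := by
      rw [← Real.rpow_add' (hf0 x) (by rw [hpq]; norm_num), hpq, Real.rpow_one]
    rcases le_total (g x) (f x) with h | h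
    · have h1 : f x ^ q - g x ^ q ≤ (f x - g x) ^ q :=
        sub_rpow_le_rpow_sub (hg0 x) h hq0.le hq1
      have h2 : (f x - g x) ^ q = |f x - g x| ^ q := by
        rw [abs_of_nonneg (sub_nonneg.2 h)]
      calc f x - f x ^ p * g x ^ q = f x ^ p * (f x ^ q - g x ^ q) := by
            rw [mul_sub, ← hfx]
        _ ≤ f x ^ p * |f x - g x| ^ q := by
            apply mul_le_mul_of_nonneg_left _ (Real.rpow_nonneg (hf0 x) p)
            rw [← h2]; exact h1
    · have h1 : f x ^ q ≤ g x ^ q := Real.rpow_le_rpow (hf0 x) h hq0.le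
      have h2 : f x - f x ^ p * g x ^ q = f x ^ p * (f x ^ q - g x ^ q) := by
        rw [mul_sub, ← hfx]
      rw [h2]
      exact le_trans (mul_nonpos_of_nonneg_of_nonpos (Real.rpow_nonneg (hf0 x) p)
        (by linarith)) (mul_nonneg (Real.rpow_nonneg (hf0 x) p)
        (Real.rpow_nonneg (habs0 x) q))
  calc (∫ x in E, f x ∂μ) - ∫ x in E, f x ^ p * g x ^ q ∂μ
      = ∫ x in E, (f x - f x ^ p * g x ^ q) ∂μ :=
        (integral_sub hf_int.restrict hfg_int.restrict).symm
    _ ≤ ∫ x in E, f x ^ p * |f x - g x| ^ q ∂μ :=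
        integral_mono ((hf_int.restrict).sub hfg_int.restrict) hfa_int.restrict
          fun x => hpoint x
    _ ≤ ∫ x, f x ^ p * |f x - g x| ^ q ∂μ :=
        setIntegral_le_integral hfa_int (Filter.Eventually.of_forall fun x =>
          mul_nonneg (Real.rpow_nonneg (hf0 x) p) (Real.rpow_nonneg (habs0 x) q))
    _ ≤ (∫ x, f x ∂μ) ^ p * (∫ x, |f x - g x| ∂μ) ^ q := by
        rcases eq_or_lt_of_le hp0 with hp0' | hp0'
        · have hq1' : q = 1 := by linarith
          have heq : (fun x => f x ^ p * |f x - g x| ^ q) = fun x => |f x - g x| := by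
            funext x
            rw [← hp0', hq1', Real.rpow_zero, Real.rpow_one, one_mul]
          rw [heq, ← hp0', hq1', Real.rpow_zero, Real.rpow_one, one_mul]
        · exact integral_rpow_mul_rpow_le hf_meas habs_meas hf0 habs0 hf_int habs_int
            hp0' hq0 hpq
    _ ≤ (∫ x, |f x - g x| ∂μ) ^ q := by
        have h1 : (∫ x, f x ∂μ) ^ p ≤ 1 :=
          Real.rpow_le_one (integral_nonneg hf0) hf1 hp0
        calc (∫ x, f x ∂μ) ^ p * (∫ x, |f x - g x| ∂μ) ^ q
            ≤ 1 * (∫ x, |f x - g x| ∂μ) ^ q :=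
              mul_le_mul_of_nonneg_right h1 (Real.rpow_nonneg (integral_nonneg habs0) q)
          _ = (∫ x, |f x - g x| ∂μ) ^ q := one_mul _
end

section
/- Let (X, Σ) be a measurable space, μ a measure on X, n ≥ 1 and k integers with 0 ≤ k ≤ n, and f, g : X → ℝ nonnegative measurable functions with ∫_X f dμ = ∫_X g dμ = 1. Let τ be a measure on X with τ(X) = 1 such that ∫_E f^(k/n) · g^((n−k)/n) dμ ≤ τ(E) for every measurable set E ⊆ X. Then for every measurable set E ⊆ X one has |τ(E) − ∫_E f dμ| ≤ (∫_X |f − g| dμ)^((n−k)/n). -/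
open MeasureTheory Real

/-- Weighted geometric mean dominates the minimum. -/
lemma min_le_geom_aux {u v a b : ℝ} (hu : 0 ≤ u) (hv : 0 ≤ v) (ha : 0 ≤ a) (hb : 0 ≤ b)
    (hab : a + b = 1) : min u v ≤ u ^ a * v ^ b := by
  rcases le_total u v with h | h
  · rw [min_eq_left h]
    rcases eq_or_lt_of_le hu with h0 | h0
    · exact le_trans (by rw [← h0]) (mul_nonneg (Real.rpow_nonneg hu a) (Real.rpow_nonneg hv b))
    · calc u = u ^ (a + b) := by rw [hab, Real.rpow_one]
        _ = u ^ a * u ^ b := Real.rpow_add h0 a b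
        _ ≤ u ^ a * v ^ b :=
          mul_le_mul_of_nonneg_left (Real.rpow_le_rpow hu h hb) (Real.rpow_nonneg hu a)
  · rw [min_eq_right h]
    rcases eq_or_lt_of_le hv with h0 | h0
    · exact le_trans (by rw [← h0]) (mul_nonneg (Real.rpow_nonneg hu a) (Real.rpow_nonneg hv b))
    · calc v = v ^ (a + b) := by rw [hab, Real.rpow_one]
        _ = v ^ a * v ^ b := Real.rpow_add h0 a b
        _ ≤ u ^ a * v ^ b :=
          mul_le_mul_of_nonneg_right (Real.rpow_le_rpow hv h ha) (Real.rpow_nonneg hv b)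

/-- Abstract measure-theoretic form of Lemma 2.6: if `f, g ≥ 0` are measurable with
`∫ f dμ = ∫ g dμ = 1`, and `τ` is a measure of total mass `1` dominating the measure
with density `f^(k/n) g^((n−k)/n)` with respect to `μ`, then for every measurable `E`,
`|τ(E) − ∫_E f dμ| ≤ (∫_X |f − g| dμ)^((n−k)/n)`. -/
theorem abstract_lemma_2_6 {X : Type*} [MeasurableSpace X] (μ : Measure X)
    (n k : ℕ) (hn : 1 ≤ n) (hk : k ≤ n)
    (f g : X → ℝ) (hf_meas : Measurable f) (hg_meas : Measurable g)
    (hf0 : ∀ x, 0 ≤ f x) (hg0 : ∀ x, 0 ≤ g x)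
    (hf_int : Integrable f μ) (hg_int : Integrable g μ)
    (hf1 : ∫ x, f x ∂μ = 1) (hg1 : ∫ x, g x ∂μ = 1)
    (τ : Measure X) (hτ1 : τ Set.univ = 1)
    (hdom : ∀ E : Set X, MeasurableSet E →
      ∫ x in E, f x ^ ((k : ℝ) / n) * g x ^ (((n : ℝ) - k) / n) ∂μ ≤ (τ E).toReal)
    (E : Set X) (hE : MeasurableSet E) :
    |(τ E).toReal - ∫ x in E, f x ∂μ|
      ≤ (∫ x, |f x - g x| ∂μ) ^ (((n : ℝ) - k) / n) := by
  have hn0 : (0 : ℝ) < n := by exact_mod_cast hn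
  set a : ℝ := (k : ℝ) / n with ha_def
  set b : ℝ := ((n : ℝ) - k) / n with hb_def
  have hkn : (k : ℝ) ≤ n := by exact_mod_cast hk
  have ha : 0 ≤ a := div_nonneg (Nat.cast_nonneg k) hn0.le
  have hb : 0 ≤ b := div_nonneg (by linarith) hn0.le
  have hb1 : b ≤ 1 := by rw [hb_def, div_le_one hn0]; linarith [Nat.cast_nonneg (α := ℝ) k]
  have hab : a + b = 1 := by rw [ha_def, hb_def]; field_simp; ring
  set x : ℝ := ∫ x, |f x - g x| ∂μ with hx_def
  have hx0 : 0 ≤ x := integral_nonneg fun y => abs_nonneg _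
  -- measurability / integrability facts
  have habs_int : Integrable (fun y => |f y - g y|) μ := (hf_int.sub hg_int).abs
  have hh_meas : Measurable fun y => f y ^ a * g y ^ b :=
    ((hf_meas.pow measurable_const).mul (hg_meas.pow measurable_const))
  have hh_le : ∀ y, f y ^ a * g y ^ b ≤ f y + g y := by
    intro y
    calc f y ^ a * g y ^ b ≤ a * f y + b * g y :=
          Real.geom_mean_le_arith_mean2_weighted ha hb (hf0 y) (hg0 y) hab
      _ ≤ f y + g y := by
          have h1 : a * f y ≤ 1 * f y :=
            mul_le_mul_of_nonneg_right (by linarith) (hf0 y)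
          have h2 : b * g y ≤ 1 * g y :=
            mul_le_mul_of_nonneg_right hb1 (hg0 y)
          linarith
  have hh_nonneg : ∀ y, 0 ≤ f y ^ a * g y ^ b := fun y =>
    mul_nonneg (Real.rpow_nonneg (hf0 y) a) (Real.rpow_nonneg (hg0 y) b)
  have hh_int : Integrable (fun y => f y ^ a * g y ^ b) μ :=
    (hf_int.add hg_int).mono' hh_meas.aestronglyMeasurable
      (ae_of_all _ fun y => by
        rw [Real.norm_eq_abs, abs_of_nonneg (hh_nonneg y)]; exact hh_le y)
  have hmin_int : Integrable (fun y => min (f y) (g y)) μ :=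
    hf_int.mono' (hf_meas.min hg_meas).aestronglyMeasurable
      (ae_of_all _ fun y => by
        rw [Real.norm_eq_abs, abs_of_nonneg (le_min (hf0 y) (hg0 y))]
        exact min_le_left _ _)
  -- the key one-sided estimate, for any measurable set
  have key : ∀ A : Set X, MeasurableSet A → ∫ y in A, f y ∂μ - x ≤ (τ A).toReal := by
    intro A hA
    have h1 : ∫ y in A, (f y - min (f y) (g y)) ∂μ ≤ x := by
      calc ∫ y in A, (f y - min (f y) (g y)) ∂μ ≤ ∫ y in A, |f y - g y| ∂μ := by
            refine setIntegral_mono_on (hf_int.sub hmin_int).integrableOn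
              habs_int.integrableOn hA fun y _ => ?_
            rcases le_total (f y) (g y) with h | h
            · rw [min_eq_left h]; simp [abs_nonneg]
            · rw [min_eq_right h]; exact le_abs_self _
        _ ≤ x := setIntegral_le_integral habs_int (ae_of_all _ fun y => abs_nonneg _)
      
    have h2 : ∫ y in A, min (f y) (g y) ∂μ ≤ (τ A).toReal := by
      refine le_trans ?_ (hdom A hA)
      exact setIntegral_mono_on hmin_int.integrableOn hh_int.integrableOn hA
        fun y _ => min_le_geom_aux (hf0 y) (hg0 y) ha hb hab
    have h3 : ∫ y in A, (f y - min (f y) (g y)) ∂μ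
        = ∫ y in A, f y ∂μ - ∫ y in A, min (f y) (g y) ∂μ :=
      integral_sub hf_int.integrableOn hmin_int.integrableOn
    linarith [h1, h2, h3.symm.le, h3.le]
  -- τ is a probability-like measure: masses
  have hτE_ne : τ E ≠ ⊤ := by
    refine ne_top_of_le_ne_top ?_ (measure_mono (Set.subset_univ E))
    rw [hτ1]; exact ENNReal.one_ne_top
  have hτEc_ne : τ Eᶜ ≠ ⊤ := by
    refine ne_top_of_le_ne_top ?_ (measure_mono (Set.subset_univ Eᶜ))
    rw [hτ1]; exact ENNReal.one_ne_top
  have hsum : (τ E).toReal + (τ Eᶜ).toReal = 1 := by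
    rw [← ENNReal.toReal_add hτE_ne hτEc_ne, measure_add_measure_compl hE, hτ1,
      ENNReal.toReal_one]
  have hfsum : ∫ y in E, f y ∂μ + ∫ y in Eᶜ, f y ∂μ = 1 := by
    rw [integral_add_compl hE hf_int, hf1]
  -- two-sided bound by x
  have hub : |(τ E).toReal - ∫ y in E, f y ∂μ| ≤ x := by
    rw [abs_sub_le_iff]
    constructor
    · have := key Eᶜ hE.compl
      linarith
    · have := key E hE
      linarith
  -- bound by 1
  have hτE1 : (τ E).toReal ≤ 1 := by
    have : τ E ≤ 1 := by rw [← hτ1]; exact measure_mono (Set.subset_univ E)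
    simpa using ENNReal.toReal_mono ENNReal.one_ne_top this
  have hfE0 : 0 ≤ ∫ y in E, f y ∂μ := setIntegral_nonneg hE fun y _ => hf0 y
  have hfE1 : ∫ y in E, f y ∂μ ≤ 1 := by
    rw [← hf1]; exact setIntegral_le_integral hf_int (ae_of_all _ hf0)
  have hub1 : |(τ E).toReal - ∫ y in E, f y ∂μ| ≤ 1 := by
    rw [abs_sub_le_iff]
    have h0 : 0 ≤ (τ E).toReal := ENNReal.toReal_nonneg
    constructor
    · linarith
    · linarith
  -- conclude
  rcases le_or_gt 1 x with hx1 | hx1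
  · calc |(τ E).toReal - ∫ y in E, f y ∂μ| ≤ 1 := hub1
      _ = x ^ (0 : ℝ) := (Real.rpow_zero x).symm
      _ ≤ x ^ b := Real.rpow_le_rpow_of_exponent_le hx1 hb
  · rcases eq_or_lt_of_le hb with hb0 | hb0
    · rw [← hb0, Real.rpow_zero]; exact hub1
    · rcases eq_or_lt_of_le hx0 with hx00 | hx00
      · have : |(τ E).toReal - ∫ y in E, f y ∂μ| ≤ 0 := by rw [hx00]; exact hub
        calc |(τ E).toReal - ∫ y in E, f y ∂μ| ≤ 0 := this
          _ ≤ x ^ b := Real.rpow_nonneg hx0 b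
      · calc |(τ E).toReal - ∫ y in E, f y ∂μ| ≤ x := hub
          _ = x ^ (1 : ℝ) := (Real.rpow_one x).symm
          _ ≤ x ^ b := Real.rpow_le_rpow_of_exponent_ge hx00 hx1.le hb1
end

section
/- Let (X, Σ) be a measurable space, μ a measure on X, n ≥ 1 and k integers with 0 ≤ k ≤ n, and f, g : X → ℝ nonnegative measurable functions with ∫_X f dμ = ∫_X g dμ = 1. Let τ be a measure on X with τ(X) = 1 such that ∫_E f^(k/n) · g^((n−k)/n) dμ ≤ τ(E) for every measurable set E ⊆ X. Then the total variation distance between τ and the measure with density f with respect to μ satisfies ‖τ − f·μ‖(X) ≤ 2 (∫_X |f − g| dμ)^((n−k)/n). -/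
open MeasureTheory Real
open scoped ENNReal NNReal

private lemma real_rpow_add_le_add_rpow {a b p : ℝ} (ha : 0 ≤ a) (hb : 0 ≤ b)
    (hp0 : 0 ≤ p) (hp1 : p ≤ 1) : (a + b) ^ p ≤ a ^ p + b ^ p := by
  have h := NNReal.rpow_add_le_add_rpow a.toNNReal b.toNNReal hp0 hp1
  have h' := (NNReal.coe_le_coe).mpr h
  rw [← Real.toNNReal_add ha hb] at h'
  simpa [NNReal.coe_rpow, Real.coe_toNNReal _ (by linarith : (0:ℝ) ≤ a + b),
    Real.coe_toNNReal _ ha, Real.coe_toNNReal _ hb] using h'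

private lemma rpow_sub_rpow_le_abs {a b θ : ℝ} (ha : 0 ≤ a) (hb : 0 ≤ b)
    (hθ0 : 0 ≤ θ) (hθ1 : θ ≤ 1) : a ^ θ - b ^ θ ≤ |a - b| ^ θ := by
  rcases le_total a b with hab | hab
  · have h1 : a ^ θ ≤ b ^ θ := Real.rpow_le_rpow ha hab hθ0
    have h2 : (0:ℝ) ≤ |a - b| ^ θ := Real.rpow_nonneg (abs_nonneg _) _
    linarith
  · have habs : |a - b| = a - b := abs_of_nonneg (by linarith)
    have key : (a - b + b) ^ θ ≤ (a - b) ^ θ + b ^ θ :=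
      real_rpow_add_le_add_rpow (by linarith) hb hθ0 hθ1
    rw [sub_add_cancel] at key
    rw [habs]
    linarith

private lemma memLp_rpow_inv {α : Type*} [MeasurableSpace α] {μ : Measure α} {u : α → ℝ}
    (hu0 : ∀ x, 0 ≤ u x) (hu_int : Integrable u μ) {c : ℝ} (hc : 0 < c) :
    MemLp (fun x => u x ^ c) (ENNReal.ofReal c⁻¹) μ := by
  have h := (memLp_norm_rpow_iff (q := ENNReal.ofReal c) (p := 1)
      hu_int.aestronglyMeasurable
      (by simp [ENNReal.ofReal_eq_zero, not_le, hc]) ENNReal.ofReal_ne_top).mpr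
      (memLp_one_iff_integrable.mpr hu_int)
  have hfun : (fun x => ‖u x‖ ^ (ENNReal.ofReal c).toReal) = fun x => u x ^ c := by
    funext x
    rw [Real.norm_of_nonneg (hu0 x), ENNReal.toReal_ofReal hc.le]
  have hexp : (1 : ℝ≥0∞) / ENNReal.ofReal c = ENNReal.ofReal c⁻¹ := by
    rw [one_div, ← ENNReal.ofReal_inv_of_pos hc]
  rw [hfun, hexp] at h
  exact h

/-- Abstract measure-theoretic form of the conclusion of Lemma 2.6: if `f, g ≥ 0` are
measurable with `∫ f dμ = ∫ g dμ = 1`, and `τ` is a measure of total mass `1` dominating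
the measure with density `f^(k/n) g^((n−k)/n)` with respect to `μ`, then the total
variation of the signed measure `τ − f·μ` satisfies
`‖τ − f·μ‖(X) ≤ 2 (∫_X |f − g| dμ)^((n−k)/n)`. -/
theorem abstract_lemma_2_6_totalVariation {X : Type*} [MeasurableSpace X] (μ : Measure X)
    (n k : ℕ) (hn : 1 ≤ n) (hk : k ≤ n)
    (f g : X → ℝ) (hf_meas : Measurable f) (hg_meas : Measurable g)
    (hf0 : ∀ x, 0 ≤ f x) (hg0 : ∀ x, 0 ≤ g x)
    (hf_int : Integrable f μ) (hg_int : Integrable g μ)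
    (hf1 : ∫ x, f x ∂μ = 1) (hg1 : ∫ x, g x ∂μ = 1)
    (τ : Measure X) [IsFiniteMeasure τ] (hτ1 : τ Set.univ = 1)
    (hdom : ∀ E : Set X, MeasurableSet E →
      ∫ x in E, f x ^ ((k : ℝ) / n) * g x ^ (((n : ℝ) - k) / n) ∂μ ≤ (τ E).toReal) :
    ((τ.toSignedMeasure -
        @Measure.toSignedMeasure X _ (μ.withDensity fun x => ENNReal.ofReal (f x))
          (isFiniteMeasure_withDensity_ofReal hf_int.hasFiniteIntegral)).totalVariation
      Set.univ).toReal
      ≤ 2 * (∫ x, |f x - g x| ∂μ) ^ (((n : ℝ) - k) / n) := by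
  classical
  haveI hσfin : IsFiniteMeasure (μ.withDensity fun x => ENNReal.ofReal (f x)) :=
    isFiniteMeasure_withDensity_ofReal hf_int.hasFiniteIntegral
  set σ : Measure X := μ.withDensity fun x => ENNReal.ofReal (f x) with hσdef
  set κ : ℝ := (k : ℝ) / n with hκdef
  set θ : ℝ := ((n : ℝ) - k) / n with hθdef
  have hnpos : (0:ℝ) < n := by exact_mod_cast Nat.pos_of_ne_zero (by omega)
  have hkn : (k : ℝ) ≤ n := by exact_mod_cast hk
  have hκ0 : 0 ≤ κ := div_nonneg (Nat.cast_nonneg _) hnpos.le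
  have hθ0 : 0 ≤ θ := div_nonneg (by linarith) hnpos.le
  have hκθ : κ + θ = 1 := by
    rw [hκdef, hθdef]
    field_simp
    ring
  have hθ1 : θ ≤ 1 := by linarith
  have hκ1 : κ ≤ 1 := by linarith
  -- σ evaluated on measurable sets
  have hσE : ∀ E : Set X, MeasurableSet E → (σ E).toReal = ∫ x in E, f x ∂μ := by
    intro E hE
    rw [hσdef, withDensity_apply _ hE,
      ← ofReal_integral_eq_lintegral_ofReal hf_int.restrict (ae_of_all _ hf0),
      ENNReal.toReal_ofReal (integral_nonneg hf0)]
  have hσuniv : (σ Set.univ).toReal = 1 := by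
    rw [hσE _ MeasurableSet.univ, Measure.restrict_univ, hf1]
  -- auxiliary functions
  set h : X → ℝ := fun x => f x ^ κ * g x ^ θ with hhdef
  set F : X → ℝ := fun x => f x ^ κ * |f x - g x| ^ θ with hFdef
  have hh_meas : Measurable h := (hf_meas.pow measurable_const).mul (hg_meas.pow measurable_const)
  have hF_meas : Measurable F := (hf_meas.pow measurable_const).mul
    ((hf_meas.sub hg_meas).abs.pow measurable_const)
  have hh0 : ∀ x, 0 ≤ h x := fun x =>
    mul_nonneg (Real.rpow_nonneg (hf0 x) _) (Real.rpow_nonneg (hg0 x) _)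
  have hF0 : ∀ x, 0 ≤ F x := fun x =>
    mul_nonneg (Real.rpow_nonneg (hf0 x) _) (Real.rpow_nonneg (abs_nonneg _) _)
  have hfg_int : Integrable (fun x => |f x - g x|) μ := (hf_int.sub hg_int).abs
  have hh_le : ∀ x, h x ≤ κ * f x + θ * g x := fun x =>
    Real.geom_mean_le_arith_mean2_weighted hκ0 hθ0 (hf0 x) (hg0 x) hκθ
  have hF_le : ∀ x, F x ≤ κ * f x + θ * |f x - g x| := fun x =>
    Real.geom_mean_le_arith_mean2_weighted hκ0 hθ0 (hf0 x) (abs_nonneg _) hκθ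
  have hh_int : Integrable h μ := by
    refine Integrable.mono' ((hf_int.const_mul κ).add (hg_int.const_mul θ))
      hh_meas.aestronglyMeasurable (ae_of_all _ fun x => ?_)
    rw [Real.norm_eq_abs, abs_of_nonneg (hh0 x)]
    exact hh_le x
  have hF_int : Integrable F μ := by
    refine Integrable.mono' ((hf_int.const_mul κ).add (hfg_int.const_mul θ))
      hF_meas.aestronglyMeasurable (ae_of_all _ fun x => ?_)
    rw [Real.norm_eq_abs, abs_of_nonneg (hF0 x)]
    exact hF_le x
  -- pointwise inequality : f - h ≤ F
  have hfh_le : ∀ x, f x - h x ≤ F x := by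
    intro x
    have h1 : f x - h x = f x ^ κ * (f x ^ θ - g x ^ θ) := by
      simp only [hhdef]
      rw [mul_sub, ← Real.rpow_add' (hf0 x) (by rw [hκθ]; exact one_ne_zero), hκθ,
        Real.rpow_one]
    rw [h1, hFdef]
    exact mul_le_mul_of_nonneg_left
      (rpow_sub_rpow_le_abs (hf0 x) (hg0 x) hθ0 hθ1) (Real.rpow_nonneg (hf0 x) _)
  -- the Hölder-type bound : ∫ F ≤ (∫ |f-g|)^θ
  set I : ℝ := ∫ x, |f x - g x| ∂μ with hIdef
  have hI0 : 0 ≤ I := integral_nonneg fun x => abs_nonneg _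
  have hHolder : ∫ x, F x ∂μ ≤ I ^ θ := by
    by_cases hk0 : k = 0
    · subst hk0
      have hκ' : κ = 0 := by rw [hκdef]; simp
      have hθ' : θ = 1 := by rw [hθdef]; field_simp; simp
      have : ∫ x, F x ∂μ = I := by
        refine integral_congr_ae (ae_of_all _ fun x => ?_)
        simp [hFdef, hκ', hθ']
      rw [this, hθ', Real.rpow_one]
    · by_cases hkn' : k = n
      · subst hkn'
        have hκ' : κ = 1 := by rw [hκdef]; field_simp
        have hθ' : θ = 0 := by rw [hθdef]; simp
        have : ∫ x, F x ∂μ = 1 := by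
          rw [← hf1]
          refine integral_congr_ae (ae_of_all _ fun x => ?_)
          simp [hFdef, hκ', hθ']
        rw [this, hθ', Real.rpow_zero]
      · -- 0 < k < n : genuine Hölder
        have hkpos : 0 < k := Nat.pos_of_ne_zero hk0
        have hklt : k < n := lt_of_le_of_ne hk hkn'
        have hκpos : 0 < κ := div_pos (by exact_mod_cast hkpos) hnpos
        have hθpos : 0 < θ := div_pos (by
          have : (k : ℝ) < n := by exact_mod_cast hklt
          linarith) hnpos
        have hκlt1 : κ < 1 := by linarith
        have hpq : (κ⁻¹).HolderConjugate θ⁻¹ := by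
          rw [Real.holderConjugate_iff]
          constructor
          · rw [lt_inv_comm₀ zero_lt_one hκpos]
            simpa using hκlt1
          · rw [inv_inv, inv_inv]; exact hκθ
        have hmf : MemLp (fun x => f x ^ κ) (ENNReal.ofReal κ⁻¹) μ :=
          memLp_rpow_inv hf0 hf_int hκpos
        have hmg : MemLp (fun x => |f x - g x| ^ θ) (ENNReal.ofReal θ⁻¹) μ :=
          memLp_rpow_inv (fun x => abs_nonneg _) hfg_int hθpos
        have H := integral_mul_le_Lp_mul_Lq_of_nonneg hpq
          (ae_of_all _ fun x => Real.rpow_nonneg (hf0 x) κ)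
          (ae_of_all _ fun x => Real.rpow_nonneg (abs_nonneg _) θ) hmf hmg
        have e1 : ∫ a, (f a ^ κ) ^ κ⁻¹ ∂μ = 1 := by
          rw [← hf1]
          refine integral_congr_ae (ae_of_all _ fun x => ?_)
          show (f x ^ κ) ^ κ⁻¹ = f x
          rw [← Real.rpow_mul (hf0 x), mul_inv_cancel₀ hκpos.ne', Real.rpow_one]
        have e2 : ∫ a, (|f a - g a| ^ θ) ^ θ⁻¹ ∂μ = I := by
          refine integral_congr_ae (ae_of_all _ fun x => ?_)
          show (|f x - g x| ^ θ) ^ θ⁻¹ = |f x - g x|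
          rw [← Real.rpow_mul (abs_nonneg _), mul_inv_cancel₀ hθpos.ne', Real.rpow_one]
        rw [e1, e2, one_div, one_div, inv_inv, inv_inv] at H
        calc ∫ x, F x ∂μ = ∫ a, (f a ^ κ) * (|f a - g a| ^ θ) ∂μ := rfl
          _ ≤ 1 ^ κ * I ^ θ := H
          _ = I ^ θ := by rw [Real.one_rpow, one_mul]
  -- signed measure and Jordan decomposition
  show ((τ.toSignedMeasure - σ.toSignedMeasure).totalVariation Set.univ).toReal ≤ 2 * I ^ θ
  set s : SignedMeasure X := τ.toSignedMeasure - σ.toSignedMeasure with hsdef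
  have hsE : ∀ E : Set X, MeasurableSet E → s E = (τ E).toReal - (σ E).toReal := by
    intro E hE
    rw [hsdef, VectorMeasure.sub_apply, Measure.toSignedMeasure_apply_measurable hE,
      Measure.toSignedMeasure_apply_measurable hE]
    rfl
  obtain ⟨i, hi₁, hi₂, hi₃, hpos, hneg⟩ := s.toJordanDecomposition_spec
  have hTV : (s.totalVariation Set.univ).toReal = s i + -s iᶜ := by
    rw [SignedMeasure.totalVariation, Measure.add_apply, hpos, hneg,
      SignedMeasure.toMeasureOfZeroLE_apply _ hi₂ hi₁ MeasurableSet.univ,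
      SignedMeasure.toMeasureOfLEZero_apply _ hi₃ hi₁.compl MeasurableSet.univ,
      ← ENNReal.coe_add, ENNReal.coe_toReal, NNReal.coe_add, NNReal.coe_mk, NNReal.coe_mk,
      Set.inter_univ, Set.inter_univ]
  -- s i = - s iᶜ
  have hτsplit : (τ i).toReal + (τ iᶜ).toReal = 1 := by
    rw [← ENNReal.toReal_add (measure_ne_top _ _) (measure_ne_top _ _),
      measure_add_measure_compl hi₁, hτ1, ENNReal.toReal_one]
  have hσsplit : (σ i).toReal + (σ iᶜ).toReal = 1 := by
    rw [← ENNReal.toReal_add (measure_ne_top _ _) (measure_ne_top _ _),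
      measure_add_measure_compl hi₁, hσuniv]
  have hsi : s i = -s iᶜ := by
    rw [hsE i hi₁, hsE iᶜ hi₁.compl]
    linarith
  -- final estimate
  have key : (σ iᶜ).toReal - (τ iᶜ).toReal ≤ I ^ θ := by
    have h1 : (σ iᶜ).toReal - (τ iᶜ).toReal ≤ ∫ x in iᶜ, (f x - h x) ∂μ := by
      rw [hσE _ hi₁.compl, integral_sub hf_int.restrict hh_int.restrict]
      have hd := hdom iᶜ hi₁.compl
      linarith
    have h2 : ∫ x in iᶜ, (f x - h x) ∂μ ≤ ∫ x in iᶜ, F x ∂μ :=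
      integral_mono (hf_int.restrict.sub hh_int.restrict) hF_int.restrict fun x => hfh_le x
    have h3 : ∫ x in iᶜ, F x ∂μ ≤ ∫ x, F x ∂μ :=
      setIntegral_le_integral hF_int (ae_of_all _ hF0)
    linarith
  rw [hTV, hsi, hsE iᶜ hi₁.compl]
  linarith
end

section
/- Let μ be a probability measure on a measurable space X (μ(X) = 1), let h : X → ℝ be a measurable function, and let a > 0 and ε₀ > 0 be real numbers. Suppose that μ({x ∈ X : |h(x) − t| ≤ a}) ≤ 1 − 2ε₀ for every t ∈ ℝ. Then there exists c ∈ ℝ such that μ({x ∈ X : h(x) < c + a}) ≤ 1 − ε₀ and μ({x ∈ X : h(x) > c − a}) ≤ 1 − ε₀. -/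
open MeasureTheory

/-- Threshold-selection step in the proof of Theorem 2.5: if `μ` is a probability
measure, `h` is measurable, `a > 0`, `ε₀ > 0`, and for every `t ∈ ℝ` the mass of
`{|h − t| ≤ a}` is at most `1 − 2ε₀`, then there is `c ∈ ℝ` such that both
`μ({h < c + a}) ≤ 1 − ε₀` and `μ({h > c − a}) ≤ 1 − ε₀`. -/
theorem threshold_selection {X : Type*} [MeasurableSpace X]
    (μ : Measure X) [IsProbabilityMeasure μ]
    (h : X → ℝ) (hh : Measurable h)
    (a ε₀ : ℝ) (ha : 0 < a) (hε₀ : 0 < ε₀)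
    (hyp : ∀ t : ℝ, (μ {x | |h x - t| ≤ a}).toReal ≤ 1 - 2 * ε₀) :
    ∃ c : ℝ, (μ {x | h x < c + a}).toReal ≤ 1 - ε₀ ∧
      (μ {x | h x > c - a}).toReal ≤ 1 - ε₀ := by
  -- `ε₀ ≤ 1/2`
  have hε₀half : 2 * ε₀ ≤ 1 := by
    have := hyp 0
    have h0 : (0:ℝ) ≤ (μ {x | |h x - 0| ≤ a}).toReal := ENNReal.toReal_nonneg
    linarith
  set F : ℝ → ℝ := fun t => (μ {x | h x < t}).toReal with hF
  have Fmono : Monotone F := by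
    intro s t hst
    exact ENNReal.toReal_mono (measure_ne_top μ _)
      (measure_mono fun x hx => lt_of_lt_of_le hx hst)
  -- key subadditivity: F (t + a) ≤ F (t - a) + (1 - 2ε₀)
  have key : ∀ t : ℝ, F (t + a) ≤ F (t - a) + (1 - 2 * ε₀) := by
    intro t
    have hsub : {x | h x < t + a} ⊆ {x | h x < t - a} ∪ {x | |h x - t| ≤ a} := by
      intro x hx
      by_cases hc : |h x - t| ≤ a
      · exact Or.inr hc
      · left
        rw [not_le] at hc
        rcases lt_abs.mp hc with h1 | h1
        · exact absurd hx (by simp only [Set.mem_setOf_eq]; push_neg; linarith)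
        · simp only [Set.mem_setOf_eq] at hx ⊢; linarith
    calc F (t + a) ≤ ((μ {x | h x < t - a}) + (μ {x | |h x - t| ≤ a})).toReal := by
          exact ENNReal.toReal_mono (by finiteness)
            ((measure_mono hsub).trans (measure_union_le _ _))
      _ = F (t - a) + (μ {x | |h x - t| ≤ a}).toReal :=
          ENNReal.toReal_add (measure_ne_top μ _) (measure_ne_top μ _)
      _ ≤ F (t - a) + (1 - 2 * ε₀) := by linarith [hyp t]
  set S : Set ℝ := {t | F (t + a) ≤ 1 - ε₀} with hS
  -- S nonempty
  have Sne : S.Nonempty := by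
    by_contra hc
    rw [Set.not_nonempty_iff_eq_empty] at hc
    have hall : ∀ t : ℝ, 1 - ε₀ < F t := by
      intro t
      have := Set.eq_empty_iff_forall_notMem.mp hc (t - a)
      simp only [hS, Set.mem_setOf_eq, not_le, sub_add_cancel] at this
      exact this
    -- but the measure of {h < -n} tends to 0
    have hIe : (⋂ n : ℕ, {x | h x < -(n:ℝ)}) = ∅ := by
      ext x
      simp only [Set.mem_iInter, Set.mem_setOf_eq, Set.mem_empty_iff_false, iff_false, not_forall,
        not_lt]
      obtain ⟨n, hn⟩ := exists_nat_ge (-(h x))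
      exact ⟨n, by linarith⟩
    have hanti : Antitone fun n : ℕ => {x | h x < -(n:ℝ)} := by
      intro m n hmn x hx
      simp only [Set.mem_setOf_eq] at *
      have : (m:ℝ) ≤ n := by exact_mod_cast hmn
      linarith
    have := hanti.measure_iInter (fun n => (hh measurableSet_Iio).nullMeasurableSet)
      ⟨0, measure_ne_top μ _⟩
    rw [hIe, measure_empty] at this
    -- each term is ≥ ofReal (1 - ε₀) > 0
    have hlb : ∀ n : ℕ, ENNReal.ofReal (1 - ε₀) ≤ μ {x | h x < -(n:ℝ)} := by
      intro n
      exact ENNReal.ofReal_le_of_le_toReal (le_of_lt (hall _))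
    have hle0 : ENNReal.ofReal (1 - ε₀) ≤ 0 := this ▸ le_iInf hlb
    have h1 : (0:ℝ) < 1 - ε₀ := by linarith
    exact (ENNReal.ofReal_pos.mpr h1).not_ge hle0
  -- S bounded above
  have Sbdd : BddAbove S := by
    by_contra hc
    rw [not_bddAbove_iff] at hc
    -- μ univ = sup μ {h < n}
    have hmono : Monotone fun n : ℕ => {x | h x < (n:ℝ)} := by
      intro m n hmn x hx
      simp only [Set.mem_setOf_eq] at *
      have : (m:ℝ) ≤ n := by exact_mod_cast hmn
      linarith
    have hUe : (⋃ n : ℕ, {x | h x < (n:ℝ)}) = Set.univ := by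
      ext x
      simp only [Set.mem_iUnion, Set.mem_setOf_eq, Set.mem_univ, iff_true]
      obtain ⟨n, hn⟩ := exists_nat_gt (h x)
      exact ⟨n, hn⟩
    have hU := hmono.measure_iUnion (μ := μ)
    rw [hUe, measure_univ] at hU
    -- each μ {h < n} ≤ ofReal (1 - ε₀)
    have hub : ∀ n : ℕ, μ {x | h x < (n:ℝ)} ≤ ENNReal.ofReal (1 - ε₀) := by
      intro n
      obtain ⟨t, htS, htn⟩ := hc ((n:ℝ))
      have h1 : F (n:ℝ) ≤ F (t + a) :=
        Fmono (by linarith)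
      have h2 : F (n:ℝ) ≤ 1 - ε₀ := h1.trans htS
      rw [ENNReal.le_ofReal_iff_toReal_le (measure_ne_top μ _) (by linarith)]
      exact h2
    have : (1:ENNReal) ≤ ENNReal.ofReal (1 - ε₀) := hU ▸ iSup_le hub
    rw [ENNReal.one_le_ofReal] at this
    linarith
  set c := sSup S with hc
  refine ⟨c, ?_, ?_⟩
  · -- μ {h < c + a} ≤ 1 - ε₀
    have hUe : {x | h x < c + a} = ⋃ n : ℕ, {x | h x < c - 1/(n+1) + a} := by
      ext x
      simp only [Set.mem_iUnion, Set.mem_setOf_eq]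
      constructor
      · intro hx
        obtain ⟨n, hn⟩ := exists_nat_one_div_lt (show (0:ℝ) < c + a - h x by linarith)
        exact ⟨n, by linarith⟩
      · rintro ⟨n, hn⟩
        have : (0:ℝ) < 1/((n:ℝ)+1) := by positivity
        linarith
    have hmono : Monotone fun n : ℕ => {x | h x < c - 1/((n:ℝ)+1) + a} := by
      intro m n hmn x hx
      simp only [Set.mem_setOf_eq] at *
      have h1 : 1/((n:ℝ)+1) ≤ 1/((m:ℝ)+1) := by
        apply one_div_le_one_div_of_le (by positivity)
        have : (m:ℝ) ≤ n := by exact_mod_cast hmn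
        linarith
      linarith
    have hub : ∀ n : ℕ, μ {x | h x < c - 1/((n:ℝ)+1) + a} ≤ ENNReal.ofReal (1 - ε₀) := by
      intro n
      -- c - 1/(n+1) < c = sSup S, so some s ∈ S exceeds it
      have hlt : c - 1/((n:ℝ)+1) < c := by
        have : (0:ℝ) < 1/((n:ℝ)+1) := by positivity
        linarith
      obtain ⟨s, hsS, hs⟩ := exists_lt_of_lt_csSup Sne hlt
      have : F (c - 1/((n:ℝ)+1) + a) ≤ 1 - ε₀ :=
        (Fmono (by linarith)).trans hsS
      rw [ENNReal.le_ofReal_iff_toReal_le (measure_ne_top μ _) (by linarith)]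
      exact this
    have := hUe ▸ (hmono.measure_iUnion (μ := μ) ▸ iSup_le hub :
      μ (⋃ n : ℕ, {x | h x < c - 1/((n:ℝ)+1) + a}) ≤ ENNReal.ofReal (1 - ε₀))
    calc (μ {x | h x < c + a}).toReal ≤ (ENNReal.ofReal (1 - ε₀)).toReal :=
          ENNReal.toReal_mono ENNReal.ofReal_ne_top this
      _ = 1 - ε₀ := ENNReal.toReal_ofReal (by linarith)
  · -- μ {h > c - a} ≤ 1 - ε₀, via μ {h ≤ c - a} ≥ ε₀
    have hlb : ∀ n : ℕ, ENNReal.ofReal ε₀ ≤ μ {x | h x < c + 1/((n:ℝ)+1) - a} := by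
      intro n
      have hpos : (0:ℝ) < 1/((n:ℝ)+1) := by positivity
      have hnotS : c + 1/((n:ℝ)+1) ∉ S := fun hmem =>
        absurd (le_csSup Sbdd hmem) (by push_neg; linarith)
      have h1 : 1 - ε₀ < F (c + 1/((n:ℝ)+1) + a) := by
        simpa [hS, not_le] using hnotS
      have h2 := key (c + 1/((n:ℝ)+1))
      have h3 : ε₀ ≤ F (c + 1/((n:ℝ)+1) - a) := by linarith
      exact ENNReal.ofReal_le_of_le_toReal h3
    have hIe : {x | h x ≤ c - a} = ⋂ n : ℕ, {x | h x < c + 1/((n:ℝ)+1) - a} := by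
      ext x
      simp only [Set.mem_iInter, Set.mem_setOf_eq]
      constructor
      · intro hx n
        have : (0:ℝ) < 1/((n:ℝ)+1) := by positivity
        linarith
      · intro hx
        by_contra hgt
        push_neg at hgt
        obtain ⟨n, hn⟩ := exists_nat_one_div_lt (show (0:ℝ) < h x - (c - a) by linarith)
        have := hx n
        linarith
    have hanti : Antitone fun n : ℕ => {x | h x < c + 1/((n:ℝ)+1) - a} := by
      intro m n hmn x hx
      simp only [Set.mem_setOf_eq] at *
      have h1 : 1/((n:ℝ)+1) ≤ 1/((m:ℝ)+1) := by
        apply one_div_le_one_div_of_le (by positivity)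
        have : (m:ℝ) ≤ n := by exact_mod_cast hmn
        linarith
      linarith
    have hI := hanti.measure_iInter (fun n => (hh measurableSet_Iio).nullMeasurableSet)
      ⟨0, measure_ne_top μ _⟩
    have hle : ENNReal.ofReal ε₀ ≤ μ {x | h x ≤ c - a} := by
      rw [hIe, hI]
      exact le_iInf hlb
    have hε₀le : ε₀ ≤ (μ {x | h x ≤ c - a}).toReal := by
      have := ENNReal.toReal_mono (measure_ne_top μ _) hle
      rwa [ENNReal.toReal_ofReal (le_of_lt hε₀)] at this
    have hcompl : {x | h x > c - a} = {x | h x ≤ c - a}ᶜ := by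
      ext x; simp [not_le]
    rw [hcompl, measure_compl (show MeasurableSet {x | h x ≤ c - a} from hh measurableSet_Iic) (measure_ne_top μ _), measure_univ,
      ENNReal.toReal_sub_of_le prob_le_one ENNReal.one_ne_top, ENNReal.toReal_one]
    linarith
end
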